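/- For a morphism φ from the term algebra T_n({x_1,...,x_r}) to L_n and the term t := ⋁_{(a_1,...,a_r) ∈ L_n^r} (J_{na_1}(x_1) ∧ ... ∧ J_{na_r}(x_r) ∧ s(a_1,...,a_r, f(a_1,...,a_r))), the disjunction collapses: φ(t) = φ(s(b_1,...,b_r, f(b_1,...,b_r))), where b_i := φ(x_i). -/

import Mathlib

/-- The underlying set of the standard LM_n-algebra: {0, 1/n, ..., (n-1)/n, 1} ⊆ ℚ. -/
def Ln (n : ℕ) : Set ℚ := {x | ∃ j : ℕ, j ≤ n ∧ x = (j : ℚ) / n}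

/-- The Chrysippian endomorphism Δ_i on ℚ: on L_n, Δ_i(j/n) = 1 iff i + j ≥ n + 1. -/
def Delta (n i : ℕ) (x : ℚ) : ℚ := if (n : ℚ) + 1 ≤ (i : ℚ) + x * n then 1 else 0

/-- Terms in the signature (∨, ∧, N, 0, 1, Δ_1, ..., Δ_n) over variables x_1, ..., x_r. -/
inductive LMTerm (r : ℕ) where
  | var (i : Fin r)
  | zero
  | one
  | neg (t : LMTerm r)
  | sup (t u : LMTerm r)
  | inf (t u : LMTerm r)
  | delta (i : ℕ) (t : LMTerm r)

/-- Evaluation of a term in the standard LM_n-algebra under a valuation φ. -/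
def LMTerm.eval (n : ℕ) {r : ℕ} (φ : Fin r → ℚ) : LMTerm r → ℚ
  | .var i => φ i
  | .zero => 0
  | .one => 1
  | .neg t => 1 - t.eval n φ
  | .sup t u => max (t.eval n φ) (u.eval n φ)
  | .inf t u => min (t.eval n φ) (u.eval n φ)
  | .delta i t => Delta n i (t.eval n φ)

/-- A function is Moisil representable if some term evaluates to it under
every valuation into L_n. -/
def Representable (n r : ℕ) (f : (Fin r → ℚ) → ℚ) : Prop :=
  ∃ t : LMTerm r, ∀ φ : Fin r → ℚ, (∀ i, φ i ∈ Ln n) → t.eval n φ = f φ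

/-- The set {0, 1, a_1, ..., a_r, 1 - a_1, ..., 1 - a_r}. -/
def Mset (r : ℕ) (a : Fin r → ℚ) : Set ℚ :=
  {x | x = 0 ∨ x = 1 ∨ ∃ i : Fin r, x = a i ∨ x = 1 - a i}

/-- The term J_i applied to a term v: J_n = Δ_1, J_0 = N Δ_n,
J_i = Δ_{n-i+1} ∧ N Δ_{n-i} for 0 < i < n. -/
def Jterm (n : ℕ) {r : ℕ} (i : ℕ) (v : LMTerm r) : LMTerm r :=
  if i = n then .delta 1 v
  else if i = 0 then .neg (.delta n v)
  else .inf (.delta (n - i + 1) v) (.neg (.delta (n - i) v))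

/-- The term s(a_1,...,a_r,c): 1 if c = 1, 0 if c = 0, x_i if i is minimal with
c = a_i, and N x_i if c ∉ {0, 1, a_1, ..., a_r} and i is minimal with c = 1 - a_i. -/
def sTerm {r : ℕ} (a : Fin r → ℚ) (c : ℚ) : LMTerm r :=
  if c = 1 then .one
  else if c = 0 then .zero
  else if h : (Finset.univ.filter (fun j : Fin r => c = a j)).Nonempty then
    .var ((Finset.univ.filter (fun j : Fin r => c = a j)).min' h)
  else if h' : (Finset.univ.filter (fun j : Fin r => c = 1 - a j)).Nonempty then
    .neg (.var ((Finset.univ.filter (fun j : Fin r => c = 1 - a j)).min' h'))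
  else .zero

/-- The conjunction J_{n a_1}(x_1) ∧ ... ∧ J_{n a_r}(x_r) ∧ s, where the tuple
(a_1, ..., a_r) ∈ L_n^r is encoded by v : Fin r → Fin (n+1), a_i = (v i)/n. -/
def conjTerm (n : ℕ) {r : ℕ} (v : Fin r → Fin (n + 1)) (s : LMTerm r) : LMTerm r :=
  (List.finRange r).foldr (fun i acc => .inf (Jterm n (v i) (.var i)) acc) s

/-- The tuple of rationals encoded by v : Fin r → Fin (n+1). -/
def tupOf (n : ℕ) {r : ℕ} (v : Fin r → Fin (n + 1)) : Fin r → ℚ :=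
  fun i => ((v i : ℕ) : ℚ) / n

/-- The disjunctive normal form term
t = ⋁_{a⃗ ∈ L_n^r} (J_{n a_1}(x_1) ∧ ... ∧ J_{n a_r}(x_r) ∧ s(a⃗, f(a⃗))). -/
noncomputable def bigTerm (n r : ℕ) (f : (Fin r → ℚ) → ℚ) : LMTerm r :=
  ((Finset.univ : Finset (Fin r → Fin (n + 1))).toList.map
    (fun v => conjTerm n v (sTerm (tupOf n v) (f (tupOf n v))))).foldr .sup .zero

lemma Ln_bounds {n : ℕ} (hn : 0 < n) {x : ℚ} (hx : x ∈ Ln n) : 0 ≤ x ∧ x ≤ 1 := by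
  obtain ⟨j, hj, rfl⟩ := hx
  have hn' : (0:ℚ) < n := by exact_mod_cast hn
  constructor
  · positivity
  · rw [div_le_one hn']; exact_mod_cast hj

lemma Delta_eval (n m k : ℕ) (hn : 0 < n) :
    Delta n m ((k:ℚ)/n) = if n + 1 ≤ m + k then 1 else 0 := by
  have hn' : (n:ℚ) ≠ 0 := by exact_mod_cast hn.ne'
  unfold Delta
  rw [div_mul_cancel₀ _ hn']
  have : ((n:ℚ) + 1 ≤ (m:ℚ) + (k:ℚ)) ↔ (n + 1 ≤ m + k) := by
    constructor <;> intro h <;> exact_mod_cast h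
  simp [this]

lemma Jterm_eval {r : ℕ} (n j k : ℕ) (hn : 2 ≤ n) (hj : j ≤ n) (hk : k ≤ n)
    (φ : Fin r → ℚ) (p : Fin r) (hp : φ p = (k:ℚ)/n) :
    (Jterm n j (.var p)).eval n φ = if j = k then 1 else 0 := by
  have hn0 : 0 < n := by omega
  by_cases h1 : j = n
  · unfold Jterm
    rw [if_pos h1]
    show Delta n 1 (φ p) = _
    rw [hp, Delta_eval n 1 k hn0]
    by_cases h : n = k
    · rw [if_pos (by omega), if_pos (by omega)]
    · rw [if_neg (by omega), if_neg (by omega)]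
  · by_cases h2 : j = 0
    · unfold Jterm
      rw [if_neg h1, if_pos h2]
      show 1 - Delta n n (φ p) = _
      rw [hp, Delta_eval n n k hn0]
      by_cases h : (0:ℕ) = k
      · rw [if_neg (by omega), if_pos (by omega)]; norm_num
      · rw [if_pos (by omega), if_neg (by omega)]; norm_num
    · unfold Jterm
      rw [if_neg h1, if_neg h2]
      show min (Delta n (n - j + 1) (φ p)) (1 - Delta n (n - j) (φ p)) = _
      rw [hp, Delta_eval _ _ _ hn0, Delta_eval _ _ _ hn0]
      by_cases h : j = k
      · rw [if_pos (by omega), if_neg (by omega), if_pos h]; norm_num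
      · rcases lt_or_gt_of_ne (fun hkk => h hkk.symm : k ≠ j) with hlt | hgt
        · rw [if_neg (by omega), if_neg (by omega), if_neg h]; norm_num
        · rw [if_pos (by omega), if_pos (by omega), if_neg h]; norm_num

lemma sTerm_bounds (n : ℕ) {r : ℕ} (hn : 0 < n) (a : Fin r → ℚ) (c : ℚ)
    (φ : Fin r → ℚ) (hφ : ∀ i, φ i ∈ Ln n) :
    0 ≤ (sTerm a c).eval n φ ∧ (sTerm a c).eval n φ ≤ 1 := by
  unfold sTerm
  split_ifs with h1 h2 h3 h4 <;> simp [LMTerm.eval]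
  · exact Ln_bounds hn (hφ _)
  · have := Ln_bounds hn (hφ ((Finset.univ.filter (fun j : Fin r => c = 1 - a j)).min' h4))
    constructor <;> linarith [this.1, this.2]

lemma tupOf_eq_iff {n r : ℕ} (hn : 0 < n) (v : Fin r → Fin (n+1)) (i : Fin r)
    (k : ℕ) : (tupOf n v i = (k:ℚ)/n) ↔ ((v i : ℕ) = k) := by
  have hn' : (n:ℚ) ≠ 0 := by exact_mod_cast hn.ne'
  unfold tupOf
  rw [div_eq_div_iff hn' hn']
  constructor
  · intro h
    have h2 : ((v i : ℕ):ℚ) = k := mul_right_cancel₀ hn' h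
    exact_mod_cast h2
  · intro h; rw [h]

lemma conj_eval (n r : ℕ) (hn : 2 ≤ n) (v : Fin r → Fin (n+1)) (s : LMTerm r)
    (φ : Fin r → ℚ) (hφ : ∀ i, φ i ∈ Ln n)
    (hs0 : 0 ≤ s.eval n φ) (hs1 : s.eval n φ ≤ 1) (l : List (Fin r)) :
    ((l.foldr (fun i acc => .inf (Jterm n (v i) (.var i)) acc) s).eval n φ) =
      if ∀ i ∈ l, tupOf n v i = φ i then s.eval n φ else 0 := by
  have hn0 : 0 < n := by omega
  induction l with
  | nil => simp
  | cons a l ih =>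
    obtain ⟨k, hk, hpa⟩ := hφ a
    have hJ := Jterm_eval n (v a) k hn (by omega) hk φ a hpa
    have hiff : (tupOf n v a = φ a) ↔ ((v a : ℕ) = k) := by
      rw [hpa]; exact tupOf_eq_iff hn0 v a k
    show min ((Jterm n (v a) (.var a)).eval n φ) _ = _
    rw [hJ, ih]
    simp only [List.forall_mem_cons]
    by_cases hva : (v a : ℕ) = k <;> by_cases hrest : ∀ i ∈ l, tupOf n v i = φ i
    · rw [if_pos hva, if_pos hrest, if_pos ⟨hiff.mpr hva, hrest⟩, min_eq_right hs1]
    · rw [if_pos hva, if_neg hrest, if_neg (fun h => hrest h.2)]; norm_num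
    · rw [if_neg hva, if_pos hrest, if_neg (fun h => hva (hiff.mp h.1))]
      exact min_eq_left hs0
    · rw [if_neg hva, if_neg hrest, if_neg (fun h => hrest h.2)]; norm_num

lemma eval_foldr_sup (n : ℕ) {r : ℕ} (φ : Fin r → ℚ) (l : List (LMTerm r)) :
    ((List.foldr LMTerm.sup LMTerm.zero l).eval n φ) =
      (l.map (fun t => t.eval n φ)).foldr max 0 := by
  induction l with
  | nil => rfl
  | cons a l ih =>
    simp only [List.foldr_cons, List.map_cons]
    show max (a.eval n φ) _ = _
    rw [ih]

lemma foldr_max_le {α : Type*} (g : α → ℚ) (T : ℚ) (hT : 0 ≤ T) :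
    ∀ l : List α, (∀ x ∈ l, g x ≤ T) → (l.map g).foldr max 0 ≤ T := by
  intro l
  induction l with
  | nil => simpa
  | cons a l ih =>
    intro h
    simp only [List.map_cons, List.foldr_cons]
    exact max_le (h a (List.mem_cons_self)) (ih fun x hx => h x (List.mem_cons_of_mem a hx))

lemma foldr_max_eq {α : Type*} (g : α → ℚ) (T : ℚ) (hT : 0 ≤ T) :
    ∀ l : List α, (∀ x ∈ l, g x ≤ T) → (∃ x ∈ l, g x = T) →
      (l.map g).foldr max 0 = T := by
  intro l
  induction l with
  | nil => rintro _ ⟨x, hx, _⟩; simp at hx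
  | cons a l ih =>
    rintro hle ⟨x, hx, hxT⟩
    simp only [List.map_cons, List.foldr_cons]
    rcases List.mem_cons.mp hx with heq | hx
    · rw [heq] at hxT
      rw [hxT]
      exact max_eq_left (foldr_max_le g T hT l fun y hy => hle y (List.mem_cons_of_mem a hy))
    · rw [ih (fun y hy => hle y (List.mem_cons_of_mem a hy)) ⟨x, hx, hxT⟩]
      exact max_eq_right (hle a (List.mem_cons_self))

/-- The disjunction collapses: for a valuation φ with b_i := φ(x_i), the evaluation
of the DNF term t equals the evaluation of s(b_1, ..., b_r, f(b_1, ..., b_r)). -/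
theorem dnf_collapse (n r : ℕ) (hn : 2 ≤ n) (hr : 1 ≤ r)
    (f : (Fin r → ℚ) → ℚ)
    (hf : ∀ a : Fin r → ℚ, (∀ i, a i ∈ Ln n) → f a ∈ Mset r a)
    (φ : Fin r → ℚ) (hφ : ∀ i, φ i ∈ Ln n) :
    (bigTerm n r f).eval n φ = (sTerm φ (f φ)).eval n φ := by
  have hn0 : 0 < n := by omega
  have hch : ∀ i, ∃ k : Fin (n+1), φ i = ((k : ℕ) : ℚ)/n := by
    intro i; obtain ⟨j, hj, hje⟩ := hφ i
    exact ⟨⟨j, by omega⟩, hje⟩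
  choose v₀ hv₀ using hch
  have htup : tupOf n v₀ = φ := by funext i; exact (hv₀ i).symm
  obtain ⟨hT0, hT1⟩ := sTerm_bounds n hn0 φ (f φ) φ hφ
  have key : ∀ v : Fin r → Fin (n+1),
      (conjTerm n v (sTerm (tupOf n v) (f (tupOf n v)))).eval n φ =
        if tupOf n v = φ then (sTerm φ (f φ)).eval n φ else 0 := by
    intro v
    unfold conjTerm
    obtain ⟨hs0, hs1⟩ := sTerm_bounds n hn0 (tupOf n v) (f (tupOf n v)) φ hφ
    rw [conj_eval n r hn v _ φ hφ hs0 hs1]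
    by_cases h : tupOf n v = φ
    · rw [if_pos h, if_pos (fun i _ => congrFun h i), h]
    · rw [if_neg h, if_neg]
      intro hall
      exact h (funext fun i => hall i (List.mem_finRange i))
  unfold bigTerm
  rw [eval_foldr_sup, List.map_map]
  apply foldr_max_eq _ _ hT0
  · intro v _
    simp only [Function.comp_apply, key]
    split_ifs <;> simp [hT0]
  · refine ⟨v₀, by simp [Finset.mem_toList], ?_⟩
    simp only [Function.comp_apply, key, if_pos htup]
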